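/- Let n ≥ 5 and consider on the open positive orthant U = {x ∈ ℝⁿ : xᵢ > 0 for all i} the Volterra matrix field P defined, with indices understood cyclically modulo n, by P_{i,i+1} = xᵢ x_{i+1}, P_{i+1,i} = −xᵢ x_{i+1}, and all other entries zero (i.e. Pᵢⱼ = (δ_{i+1,j} − δ_{i,j+1}) xᵢ xⱼ). Then the function f(x) = (x₁ x₂ ⋯ xₙ)^{−3/2} satisfies, for every index i, Σⱼ ( Pᵢⱼ(x) ∂ⱼ f(x) + f(x) ∂ⱼ Pᵢⱼ(x) ) = 0 for all x ∈ U. -/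

import Mathlib

set_option maxHeartbeats 1000000 in

/-- The first Poisson structure of the periodic Volterra lattice,
`Pᵢⱼ = (δ_{i+1,j} − δ_{i,j+1}) xᵢ xⱼ` (indices cyclic mod `n`, `n ≥ 5`), leaves the volume
density `f(x) = (x₁ ⋯ xₙ)^{-3/2}` invariant on the positive orthant: for every `i`,
`Σⱼ (Pᵢⱼ ∂ⱼf + f ∂ⱼPᵢⱼ) = 0` there. -/
theorem stmt_10 (n : ℕ) [NeZero n] (hn : 5 ≤ n)
    (P : (Fin n → ℝ) → Matrix (Fin n) (Fin n) ℝ)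
    (hP : ∀ (x : Fin n → ℝ) (i j : Fin n),
      P x i j = ((if i + 1 = j then (1 : ℝ) else 0) - (if i = j + 1 then 1 else 0))
        * (x i * x j))
    (f : (Fin n → ℝ) → ℝ)
    (hf : ∀ x : Fin n → ℝ, f x = (∏ i : Fin n, x i) ^ (-(3 : ℝ) / 2)) :
    ∀ i : Fin n, ∀ x : Fin n → ℝ, (∀ k : Fin n, 0 < x k) →
      ∑ j : Fin n, (P x i j * fderiv ℝ f x (Pi.single j 1)
        + f x * fderiv ℝ (fun y => P y i j) x (Pi.single j 1)) = 0 := by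
  intro i x hx
  have hprodpos : 0 < ∏ k : Fin n, x k := Finset.prod_pos (fun k _ => hx k)
  set c : ℝ := (-(3 : ℝ) / 2) * (∏ k : Fin n, x k) ^ ((-(3 : ℝ) / 2) - 1) with hc
  -- derivative of the product map
  have hprod : HasFDerivAt (fun y : Fin n → ℝ => ∏ k : Fin n, y k)
      (∑ k : Fin n, (∏ l ∈ Finset.univ.erase k, x l) •
        (ContinuousLinearMap.proj k : (Fin n → ℝ) →L[ℝ] ℝ)) x := by
    exact hasFDerivAt_finset_prod (𝕜 := ℝ) (u := Finset.univ) (x := x)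
  have hrpow : HasDerivAt (fun t : ℝ => t ^ (-(3 : ℝ) / 2))
      ((-(3 : ℝ) / 2) * (∏ k : Fin n, x k) ^ ((-(3 : ℝ) / 2) - 1)) (∏ k : Fin n, x k) :=
    Real.hasDerivAt_rpow_const (Or.inl hprodpos.ne')
  have hF : HasFDerivAt f
      (c • ∑ k : Fin n, (∏ l ∈ Finset.univ.erase k, x l) •
        (ContinuousLinearMap.proj k : (Fin n → ℝ) →L[ℝ] ℝ)) x := by
    have : f = (fun t : ℝ => t ^ (-(3 : ℝ) / 2)) ∘ (fun y : Fin n → ℝ => ∏ k, y k) :=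
      funext fun y => hf y
    rw [this, hc]
    exact hrpow.comp_hasFDerivAt x hprod
  have hDf : ∀ j : Fin n, fderiv ℝ f x (Pi.single j 1)
      = c * ∏ l ∈ Finset.univ.erase j, x l := by
    intro j
    rw [hF.fderiv]
    simp [ContinuousLinearMap.sum_apply, Pi.single_apply, Finset.sum_ite_eq,
      mul_comm]
  have hDP : ∀ j : Fin n, fderiv ℝ (fun y => P y i j) x (Pi.single j 1)
      = ((if i + 1 = j then (1 : ℝ) else 0) - if i = j + 1 then 1 else 0)
        * (x i + x j * (if i = j then 1 else 0)) := by
    intro j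
    have hfun2 : (fun y => P y i j) = fun y : Fin n → ℝ =>
        ((if i + 1 = j then (1 : ℝ) else 0) - if i = j + 1 then 1 else 0) * (y i * y j) :=
      funext fun y => hP y i j
    rw [hfun2]
    have h1 : HasFDerivAt (fun y : Fin n → ℝ => y i * y j)
        (x i • (ContinuousLinearMap.proj j : (Fin n → ℝ) →L[ℝ] ℝ)
          + x j • (ContinuousLinearMap.proj i : (Fin n → ℝ) →L[ℝ] ℝ)) x :=
      (hasFDerivAt_apply i x).mul (hasFDerivAt_apply j x)
    have h2 := h1.const_mul ((if i + 1 = j then (1 : ℝ) else 0) - if i = j + 1 then 1 else 0)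
    rw [h2.fderiv]
    by_cases hij : i = j <;> simp [Pi.single_apply, hij]
  have h10 : (1 : Fin n) ≠ 0 := by
    intro h
    rw [Fin.ext_iff, Fin.val_one', Fin.val_zero] at h
    rw [Nat.mod_eq_of_lt (show 1 < n by omega)] at h
    omega
  have h20 : (1 : Fin n) + 1 ≠ 0 := by
    intro h
    rw [Fin.ext_iff] at h
    simp only [Fin.add_def, Fin.val_one', Fin.val_zero] at h
    rw [Nat.mod_eq_of_lt (show 1 < n by omega)] at h
    rw [Nat.mod_eq_of_lt (show 1 + 1 < n by omega)] at h
    omega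
  set E : ℝ := x i * (c * ∏ k : Fin n, x k) + f x * x i with hE
  have key : ∀ j : Fin n,
      P x i j * fderiv ℝ f x (Pi.single j 1)
        + f x * fderiv ℝ (fun y => P y i j) x (Pi.single j 1)
      = (if i + 1 = j then E else 0) - (if i = j + 1 then E else 0) := by
    intro j
    rw [hP, hDf, hDP]
    have hper : x j * ∏ l ∈ Finset.univ.erase j, x l = ∏ k : Fin n, x k :=
      Finset.mul_prod_erase Finset.univ x (Finset.mem_univ j)
    by_cases h1 : i + 1 = j
    · have hij : i ≠ j := by
        intro h
        exact h10 (by rwa [← h, add_eq_left] at h1)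
      have h2 : ¬ (i = j + 1) := by
        intro h
        apply h20
        have : i + (1 + 1) = i + 0 := by
          rw [← add_assoc, h1, ← h, add_zero]
        exact add_left_cancel this
      simp only [if_pos h1, if_neg h2, if_neg hij, hE]
      linear_combination x i * c * hper
    · by_cases h2 : i = j + 1
      · have hij : i ≠ j := by
          intro h
          exact h10 (by rw [h] at h2; rwa [left_eq_add] at h2)
        simp only [if_neg h1, if_pos h2, if_neg hij, hE]
        linear_combination (-(x i * c)) * hper
      · simp only [if_neg h1, if_neg h2]
        ring
  rw [Finset.sum_congr rfl (fun j _ => key j), Finset.sum_sub_distrib]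
  have s1 : ∑ j : Fin n, (if i + 1 = j then E else 0) = E := by
    simp [Finset.sum_ite_eq]
  have s2 : ∑ j : Fin n, (if i = j + 1 then E else 0) = E := by
    have : ∀ j : Fin n, (if i = j + 1 then E else 0) = (if j = i - 1 then E else 0) := by
      intro j
      congr 1
      simp only [eq_iff_iff]
      constructor
      · intro h; rw [h]; exact (add_sub_cancel_right j 1).symm
      · intro h; rw [h]; exact (sub_add_cancel i 1).symm
    rw [Finset.sum_congr rfl (fun j _ => this j)]
    simp [Finset.sum_ite_eq']
  rw [s1, s2, sub_self]
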